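/- Let Z_1,…,Z_n be integrable random variables on a probability space with Z_1 ≤ Z_2 ≤ … ≤ Z_n a.s., and let α_1,…,α_n ≥ 0. Then the infimum of E[M] over all integrable random variables M satisfying E[ (Z_k − M)^+ ] ≤ α_k for every k ∈ {1,…,n} equals max_{k∈{1,…,n}} { E[Z_k] − α_k }. -/

import Mathlib

open MeasureTheory Filter
open scoped MeasureTheory

private lemma telescope_aux (f : ℕ → ℝ) (a : ℕ) :
    ∀ b, a ≤ b → ∑ k ∈ Finset.Ico a b, (f (k + 1) - f k) = f b - f a := by
  intro b hb
  induction b, hb using Nat.le_induction with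
  | base => simp
  | succ b hb ih => rw [Finset.sum_Ico_succ_top hb, ih]; ring

/-- Lemma A.2: for integrable `Z₁ ≤ Z₂ ≤ … ≤ Z_n` a.s. and `α_k ≥ 0`,
`inf { E[M] : E[(Z_k - M)⁺] ≤ α_k, k = 1,…,n } = max_k (E[Z_k] - α_k)`. -/
theorem stmt_17
    {Ω : Type*} {m0 : MeasurableSpace Ω} (P : Measure Ω) [IsProbabilityMeasure P]
    (n : ℕ) (hn : 1 ≤ n)
    (Z : ℕ → Ω → ℝ) (hZint : ∀ k, 1 ≤ k → k ≤ n → Integrable (Z k) P)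
    (hZmono : ∀ᵐ ω ∂P, ∀ j k, 1 ≤ j → j ≤ k → k ≤ n → Z j ω ≤ Z k ω)
    (α : ℕ → ℝ) (hα : ∀ k, 1 ≤ k → k ≤ n → 0 ≤ α k) :
    sInf {x : ℝ | ∃ M : Ω → ℝ, Integrable M P ∧
        (∀ k, 1 ≤ k → k ≤ n → (∫ ω, max (Z k ω - M ω) 0 ∂P) ≤ α k) ∧
        x = ∫ ω, M ω ∂P}
      = (Finset.Icc 1 n).sup' (Finset.nonempty_Icc.mpr hn)
          (fun k => (∫ ω, Z k ω ∂P) - α k) := by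
  classical
  have hne : (Finset.Icc 1 n).Nonempty := Finset.nonempty_Icc.mpr hn
  set μ : ℕ → ℝ := fun k => ∫ ω, Z k ω ∂P with hμdef
  set m : ℝ := (Finset.Icc 1 n).sup' hne (fun k => μ k - α k) with hmdef
  -- monotonicity of integrals
  have hμmono : ∀ j k, 1 ≤ j → j ≤ k → k ≤ n → μ j ≤ μ k := by
    intro j k h1 h2 h3
    exact integral_mono_ae (hZint j h1 (le_trans h2 h3)) (hZint k (le_trans h1 h2) h3)
      (hZmono.mono fun ω hω => hω j k h1 h2 h3)
  have hmge : ∀ k, 1 ≤ k → k ≤ n → μ k - α k ≤ m := by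
    intro k h1 h2
    rw [hmdef]
    exact Finset.le_sup' (fun k => μ k - α k) (Finset.mem_Icc.mpr ⟨h1, h2⟩)
  have hmlen : m ≤ μ n := by
    rw [hmdef]
    apply Finset.sup'_le
    intro k hk
    obtain ⟨h1, h2⟩ := Finset.mem_Icc.mp hk
    have hαk := hα k h1 h2
    have := hμmono k n h1 h2 le_rfl
    linarith
  set t : ℕ → ℝ := fun j => max (μ j - m) 0 with htdef
  have ht_nonneg : ∀ j, 0 ≤ t j := fun j => le_max_right _ _
  have ht_le_α : ∀ j, 1 ≤ j → j ≤ n → t j ≤ α j := by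
    intro j h1 h2
    have h := hmge j h1 h2
    exact max_le (by linarith) (hα j h1 h2)
  have ht_n : t n = μ n - m := max_eq_left (by linarith)
  have ht_mono : ∀ j k, 1 ≤ j → j ≤ k → k ≤ n → t j ≤ t k := fun j k h1 h2 h3 =>
    max_le_max (by linarith [hμmono j k h1 h2 h3]) le_rfl
  have ht_lip : ∀ k, 1 ≤ k → k + 1 ≤ n → t (k + 1) - t k ≤ μ (k + 1) - μ k := by
    intro k h1 h2
    have hμk : μ k ≤ μ (k + 1) := hμmono k (k + 1) h1 (Nat.le_succ k) h2
    have hle : max (μ (k + 1) - m) 0 ≤ t k + (μ (k + 1) - μ k) := by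
      apply max_le
      · have := le_max_left (μ k - m) (0 : ℝ); simp only [htdef]; linarith
      · have := le_max_right (μ k - m) (0 : ℝ); simp only [htdef]; linarith
    simp only [htdef] at hle ⊢
    linarith
  set θ : ℕ → ℝ := fun k =>
    if μ (k + 1) - μ k = 0 then 0 else (t (k + 1) - t k) / (μ (k + 1) - μ k) with hθdef
  have hθ_mul : ∀ k, 1 ≤ k → k + 1 ≤ n → θ k * (μ (k + 1) - μ k) = t (k + 1) - t k := by
    intro k h1 h2
    by_cases h : μ (k + 1) - μ k = 0
    · have hlo : t k ≤ t (k + 1) := ht_mono k (k + 1) h1 (Nat.le_succ k) h2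
      have hhi := ht_lip k h1 h2
      simp only [hθdef, if_pos h]
      rw [h]
      linarith
    · simp only [hθdef, if_neg h]
      field_simp
  have hθ01 : ∀ k, 1 ≤ k → k + 1 ≤ n → 0 ≤ θ k ∧ θ k ≤ 1 := by
    intro k h1 h2
    by_cases h : μ (k + 1) - μ k = 0
    · simp [hθdef, h]
    · have hd : 0 < μ (k + 1) - μ k := by
        have := hμmono k (k + 1) h1 (Nat.le_succ k) h2
        cases lt_or_eq_of_le this with
        | inl hlt => linarith
        | inr heq => exact absurd (by linarith) h
      have hlo : t k ≤ t (k + 1) := ht_mono k (k + 1) h1 (Nat.le_succ k) h2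
      have hhi := ht_lip k h1 h2
      constructor
      · simp only [hθdef, if_neg h]
        exact div_nonneg (by linarith) hd.le
      · simp only [hθdef, if_neg h]
        exact (div_le_one hd).mpr (by linarith)
  -- the optimal M
  set M : Ω → ℝ := fun ω =>
    Z n ω - t 1 - ∑ k ∈ Finset.Ico 1 n, θ k * (Z (k + 1) ω - Z k ω) with hMdef
  have hint_term : ∀ j, j ≤ n → ∀ k ∈ Finset.Ico 1 j,
      Integrable (fun ω => θ k * (Z (k + 1) ω - Z k ω)) P := by
    intro j hj k hk
    obtain ⟨hk1, hk2⟩ := Finset.mem_Ico.mp hk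
    exact ((hZint (k + 1) (by omega) (by omega)).sub (hZint k hk1 (by omega))).const_mul _
  have hint_sum : ∀ j, j ≤ n →
      Integrable (fun ω => ∑ k ∈ Finset.Ico 1 j, θ k * (Z (k + 1) ω - Z k ω)) P :=
    fun j hj => integrable_finset_sum _ (hint_term j hj)
  have hMint : Integrable M P :=
    (((hZint n hn le_rfl).sub (integrable_const (t 1))).sub (hint_sum n le_rfl))
  have hsum_int : ∀ j, j ≤ n →
      ∫ ω, (∑ k ∈ Finset.Ico 1 j, θ k * (Z (k + 1) ω - Z k ω)) ∂P
        = ∑ k ∈ Finset.Ico 1 j, θ k * (μ (k + 1) - μ k) := by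
    intro j hj
    rw [integral_finset_sum _ (hint_term j hj)]
    refine Finset.sum_congr rfl (fun k hk => ?_)
    obtain ⟨hk1, hk2⟩ := Finset.mem_Ico.mp hk
    rw [integral_const_mul,
      integral_sub (hZint (k + 1) (by omega) (by omega)) (hZint k hk1 (by omega))]
  have hsum_t : ∀ j, 1 ≤ j → j ≤ n →
      ∑ k ∈ Finset.Ico 1 j, θ k * (μ (k + 1) - μ k) = t j - t 1 := by
    intro j h1 h2
    rw [Finset.sum_congr rfl (fun k hk => by
      obtain ⟨hk1, hk2⟩ := Finset.mem_Ico.mp hk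
      exact hθ_mul k hk1 (by omega))]
    exact telescope_aux t 1 j h1
  have hintM : ∫ ω, M ω ∂P = m := by
    have h1 : ∫ ω, M ω ∂P
        = (∫ ω, (Z n ω - t 1) ∂P) - ∑ k ∈ Finset.Ico 1 n, θ k * (μ (k + 1) - μ k) := by
      rw [← hsum_int n le_rfl]
      exact integral_sub ((hZint n hn le_rfl).sub (integrable_const _)) (hint_sum n le_rfl)
    rw [h1, hsum_t n hn le_rfl, integral_sub (hZint n hn le_rfl) (integrable_const _),
      integral_const]
    simp only [measure_univ, ENNReal.toReal_one, probReal_univ, smul_eq_mul, one_mul]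
    have : (∫ ω, Z n ω ∂P) = μ n := rfl
    rw [this, ht_n]
    ring
  -- feasibility
  have hfeas : ∀ j, 1 ≤ j → j ≤ n → (∫ ω, max (Z j ω - M ω) 0 ∂P) ≤ α j := by
    intro j h1 h2
    set h : Ω → ℝ := fun ω => t 1 + ∑ k ∈ Finset.Ico 1 j, θ k * (Z (k + 1) ω - Z k ω)
      with hhdef
    have hhint : Integrable h P := (integrable_const _).add (hint_sum j h2)
    have hae : ∀ᵐ ω ∂P, max (Z j ω - M ω) 0 ≤ h ω := by
      filter_upwards [hZmono] with ω hω
      have hΔ : ∀ k, 1 ≤ k → k + 1 ≤ n → 0 ≤ Z (k + 1) ω - Z k ω := by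
        intro k hk1 hk2
        have := hω k (k + 1) hk1 (Nat.le_succ k) hk2
        linarith
      have hh0 : 0 ≤ h ω := by
        apply add_nonneg (ht_nonneg 1)
        apply Finset.sum_nonneg
        intro k hk
        obtain ⟨hk1, hk2⟩ := Finset.mem_Ico.mp hk
        exact mul_nonneg (hθ01 k hk1 (by omega)).1 (hΔ k hk1 (by omega))
      have hZM : Z j ω - M ω ≤ h ω := by
        have hsplit : (∑ k ∈ Finset.Ico 1 j, θ k * (Z (k + 1) ω - Z k ω))
            + ∑ k ∈ Finset.Ico j n, θ k * (Z (k + 1) ω - Z k ω)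
            = ∑ k ∈ Finset.Ico 1 n, θ k * (Z (k + 1) ω - Z k ω) :=
          Finset.sum_Ico_consecutive _ h1 h2
        have htel : ∑ k ∈ Finset.Ico j n, (Z (k + 1) ω - Z k ω) = Z n ω - Z j ω :=
          telescope_aux (fun k => Z k ω) j n h2
        have hle : ∑ k ∈ Finset.Ico j n, θ k * (Z (k + 1) ω - Z k ω)
            ≤ ∑ k ∈ Finset.Ico j n, (Z (k + 1) ω - Z k ω) := by
          apply Finset.sum_le_sum
          intro k hk
          obtain ⟨hk1, hk2⟩ := Finset.mem_Ico.mp hk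
          have hθk := (hθ01 k (le_trans h1 hk1) hk2).2
          have hθk0 := (hθ01 k (le_trans h1 hk1) hk2).1
          have hΔk := hΔ k (le_trans h1 hk1) hk2
          nlinarith
        rw [htel] at hle
        simp only [hMdef, hhdef]
        linarith [hsplit, hle]
      exact max_le hZM hh0
    have hmaxint : Integrable (fun ω => max (Z j ω - M ω) 0) P :=
      ((hZint j h1 h2).sub hMint).pos_part
    have hint_le : (∫ ω, max (Z j ω - M ω) 0 ∂P) ≤ ∫ ω, h ω ∂P :=
      integral_mono_ae hmaxint hhint hae
    have hinth : ∫ ω, h ω ∂P = t j := by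
      simp only [hhdef]
      rw [integral_add (integrable_const _) (hint_sum j h2), integral_const,
        hsum_int j h2, hsum_t j h1 h2]
      simp only [measure_univ, ENNReal.toReal_one, probReal_univ, smul_eq_mul, one_mul]
      ring
    calc (∫ ω, max (Z j ω - M ω) 0 ∂P) ≤ ∫ ω, h ω ∂P := hint_le
      _ = t j := hinth
      _ ≤ α j := ht_le_α j h1 h2
  -- membership
  have hmem : m ∈ {x : ℝ | ∃ M : Ω → ℝ, Integrable M P ∧
      (∀ k, 1 ≤ k → k ≤ n → (∫ ω, max (Z k ω - M ω) 0 ∂P) ≤ α k) ∧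
      x = ∫ ω, M ω ∂P} :=
    ⟨M, hMint, hfeas, hintM.symm⟩
  -- lower bound
  have hlb : ∀ x ∈ {x : ℝ | ∃ M : Ω → ℝ, Integrable M P ∧
      (∀ k, 1 ≤ k → k ≤ n → (∫ ω, max (Z k ω - M ω) 0 ∂P) ≤ α k) ∧
      x = ∫ ω, M ω ∂P}, m ≤ x := by
    rintro x ⟨N, hNint, hNfeas, rfl⟩
    rw [hmdef]
    apply Finset.sup'_le
    intro k hk
    obtain ⟨h1, h2⟩ := Finset.mem_Icc.mp hk
    have h3 : (∫ ω, (Z k ω - N ω) ∂P) ≤ ∫ ω, max (Z k ω - N ω) 0 ∂P :=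
      integral_mono ((hZint k h1 h2).sub hNint) ((hZint k h1 h2).sub hNint).pos_part
        (fun ω => le_max_left _ _)
    rw [integral_sub (hZint k h1 h2) hNint] at h3
    have h4 := hNfeas k h1 h2
    have : μ k = ∫ ω, Z k ω ∂P := rfl
    rw [this]
    linarith
  have hfinal : sInf {x : ℝ | ∃ M : Ω → ℝ, Integrable M P ∧
      (∀ k, 1 ≤ k → k ≤ n → (∫ ω, max (Z k ω - M ω) 0 ∂P) ≤ α k) ∧
      x = ∫ ω, M ω ∂P} = m :=
    le_antisymm (csInf_le ⟨m, hlb⟩ hmem) (le_csInf ⟨m, hmem⟩ hlb)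
  rw [hfinal, hmdef]
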